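/- Let μ be a finite Borel measure on T = [-π,π], symmetric about the origin, with dμ = b dλ + dμ_s (μ_s ⊥ λ, b ≥ 0 in L¹(T,λ)). Assume there exist p > 0 and C < ∞ such that λ{t ∈ T : b(t) ≤ δ} ≤ C δ^p for every δ ∈ [0,π]. Then there exists a constant c > 0 (depending only on C and p) such that for every N ≥ 1, the smallest eigenvalue of Σ_N = (μ̂(j-k))_{1≤j,k≤N} is at least c N^{-1/p}. -/

import Mathlib

open MeasureTheory ProbabilityTheory Matrix
open scoped ENNReal NNReal

noncomputable section

/-- Normalized Lebesgue measure `λ` on `T = [-π,π]`, with `λ(T) = 1`. -/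
def normLeb1 : Measure ℝ :=
  (ENNReal.ofReal (2 * Real.pi))⁻¹ • (volume.restrict (Set.Icc (-Real.pi) Real.pi))

/-- Fourier coefficient `μ̂(m) = ∫_T e^{imt} dμ(t)` for `m ∈ ℤ`. -/
def muHat1 (μ : Measure ℝ) (m : ℤ) : ℂ :=
  ∫ t, Complex.exp (Complex.I * (m : ℂ) * (t : ℂ)) ∂μ

/-- The matrix `Σ_N = (μ̂(j-k))_{1 ≤ j,k ≤ N}` (real, since `μ` is symmetric). -/
def SigmaN (μ : Measure ℝ) (N : ℕ) : Matrix (Fin N) (Fin N) ℝ :=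
  fun j k => (muHat1 μ ((j.1 : ℤ) - (k.1 : ℤ))).re

/-- `X` is a centered Gaussian vector with covariance matrix `S` (under `P`):
every linear combination of the coordinates is a centered one-dimensional
Gaussian with the corresponding variance. -/
def IsCenteredGaussianVec {ι : Type*} [Fintype ι] {Ω : Type*} [MeasurableSpace Ω]
    (P : Measure Ω) (X : ι → Ω → ℝ) (S : Matrix ι ι ℝ) : Prop :=
  ∀ u : ι → ℝ,
    P.map (fun ω => ∑ i, u i * X i ω) =
      gaussianReal 0 (Real.toNNReal (u ⬝ᵥ S.mulVec u))

namespace SmallEig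

lemma norm_exp_aux (c : ℂ) (h : c.re = 0) : ‖Complex.exp c‖ = 1 := by
  rw [Complex.norm_exp, h, Real.exp_zero]

lemma norm_expI (m : ℤ) (t : ℝ) : ‖Complex.exp (Complex.I * (m : ℂ) * (t : ℂ))‖ = 1 := by
  apply norm_exp_aux
  simp [Complex.mul_re, Complex.mul_im]

lemma integrable_expI (ν : Measure ℝ) [IsFiniteMeasure ν] (m : ℤ) :
    Integrable (fun t : ℝ => Complex.exp (Complex.I * (m : ℂ) * (t : ℂ))) ν := by
  refine Integrable.mono' (integrable_const 1) ?_ ?_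
  · exact (Complex.continuous_exp.comp (by continuity)).aestronglyMeasurable
  · filter_upwards with t
    rw [norm_expI]

/-- The trigonometric polynomial associated to `u`. -/
def P {N : ℕ} (u : Fin N → ℝ) (t : ℝ) : ℂ :=
  ∑ j : Fin N, (u j : ℂ) * Complex.exp (Complex.I * ((j : ℕ) : ℂ) * (t : ℂ))

lemma pointwise_sq (N : ℕ) (u : Fin N → ℝ) (t : ℝ) :
    ‖P u t‖ ^ 2 = ∑ j : Fin N, ∑ k : Fin N,
      u j * u k * (Complex.exp (Complex.I * ((((j : ℕ) : ℤ) - ((k : ℕ) : ℤ) : ℤ) : ℂ) * (t : ℂ))).re := by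
  have h1 : (‖P u t‖ ^ 2 : ℝ) = (P u t * (starRingEnd ℂ) (P u t)).re := by
    rw [Complex.mul_conj]
    rw [Complex.normSq_eq_norm_sq, Complex.ofReal_re]
  rw [h1]
  unfold P
  rw [map_sum, Finset.sum_mul_sum, Complex.re_sum]
  refine Finset.sum_congr rfl fun j _ => ?_
  rw [Complex.re_sum]
  refine Finset.sum_congr rfl fun k _ => ?_
  have h2 : (↑(u j) * Complex.exp (Complex.I * ((j : ℕ) : ℂ) * (t : ℂ))) *
      ((starRingEnd ℂ) (↑(u k) * Complex.exp (Complex.I * ((k : ℕ) : ℂ) * (t : ℂ))))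
      = ((u j * u k : ℝ) : ℂ) *
        Complex.exp (Complex.I * ((((j : ℕ) : ℤ) - ((k : ℕ) : ℤ) : ℤ) : ℂ) * (t : ℂ)) := by
    rw [_root_.map_mul, ← Complex.exp_conj]
    have h3 : (starRingEnd ℂ) (Complex.I * ((k : ℕ) : ℂ) * (t : ℂ)) =
        -(Complex.I * ((k : ℕ) : ℂ) * (t : ℂ)) := by
      simp [_root_.map_mul, Complex.conj_I, Complex.conj_ofReal]
    have h4 : Complex.I * ((((j : ℕ) : ℤ) - ((k : ℕ) : ℤ) : ℤ) : ℂ) * (t : ℂ)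
        = Complex.I * ((j : ℕ) : ℂ) * (t : ℂ) + -(Complex.I * ((k : ℕ) : ℂ) * (t : ℂ)) := by
      push_cast
      ring
    rw [h3, Complex.conj_ofReal, h4, Complex.exp_add, Complex.ofReal_mul]
    ring
  rw [h2, Complex.re_ofReal_mul]


lemma quadform (ν : Measure ℝ) [IsFiniteMeasure ν] {N : ℕ} (u : Fin N → ℝ) :
    u ⬝ᵥ (SigmaN ν N).mulVec u = ∫ t, ‖P u t‖ ^ 2 ∂ν := by
  have hint : ∀ (j k : Fin N), Integrable (fun t : ℝ =>
      u j * u k * (Complex.exp (Complex.I * ((((j : ℕ) : ℤ) - ((k : ℕ) : ℤ) : ℤ) : ℂ) * (t : ℂ))).re) ν :=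
    fun j k => ((integrable_expI ν _).re).const_mul _
  calc u ⬝ᵥ (SigmaN ν N).mulVec u
      = ∑ j : Fin N, ∑ k : Fin N, u j * u k *
          (muHat1 ν (((j : ℕ) : ℤ) - ((k : ℕ) : ℤ))).re := by
        simp only [dotProduct, mulVec, SigmaN, Finset.mul_sum]
        exact Finset.sum_congr rfl fun j _ => Finset.sum_congr rfl fun k _ => by ring
    _ = ∑ j : Fin N, ∑ k : Fin N, ∫ t, u j * u k *
          (Complex.exp (Complex.I * ((((j : ℕ) : ℤ) - ((k : ℕ) : ℤ) : ℤ) : ℂ) * (t : ℂ))).re ∂ν := by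
        refine Finset.sum_congr rfl fun j _ => Finset.sum_congr rfl fun k _ => ?_
        rw [integral_const_mul]
        congr 1
        have h := integral_re (μ := ν)
          (f := fun t : ℝ => Complex.exp (Complex.I * ((((j : ℕ) : ℤ) - ((k : ℕ) : ℤ) : ℤ) : ℂ) * (t : ℂ)))
          (integrable_expI ν _)
        simp only [RCLike.re_to_complex] at h
        rw [muHat1, ← h]
    _ = ∫ t, ∑ j : Fin N, ∑ k : Fin N, u j * u k *
          (Complex.exp (Complex.I * ((((j : ℕ) : ℤ) - ((k : ℕ) : ℤ) : ℤ) : ℂ) * (t : ℂ))).re ∂ν := by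
        rw [integral_finset_sum _ (fun j _ => integrable_finset_sum _ (fun k _ => hint j k))]
        exact Finset.sum_congr rfl fun j _ => (integral_finset_sum _ fun k _ => hint j k).symm
    _ = ∫ t, ‖P u t‖ ^ 2 ∂ν := by
        refine integral_congr_ae (Filter.Eventually.of_forall fun t => ?_)
        simpa using (pointwise_sq N u t).symm

instance : IsProbabilityMeasure normLeb1 := by
  constructor
  rw [normLeb1]
  have hπ : (0 : ℝ) < Real.pi := Real.pi_pos
  simp only [Measure.smul_apply, Measure.restrict_apply MeasurableSet.univ, Set.univ_inter,
    Real.volume_Icc, smul_eq_mul]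
  rw [show Real.pi - -Real.pi = 2 * Real.pi by ring]
  exact ENNReal.inv_mul_cancel (by simp [ENNReal.ofReal_pos]; positivity) ENNReal.ofReal_ne_top

lemma muHat1_normLeb1 (m : ℤ) : muHat1 normLeb1 m = if m = 0 then 1 else 0 := by
  by_cases hm : m = 0
  · subst hm
    simp only [muHat1, Int.cast_zero, mul_zero, zero_mul, Complex.exp_zero, if_true]
    simp
  · rw [if_neg hm]
    have hπ : (0 : ℝ) < Real.pi := Real.pi_pos
    rw [muHat1, normLeb1, integral_smul_measure]
    have h0 : ∫ t in Set.Icc (-Real.pi) Real.pi, Complex.exp (Complex.I * (m : ℂ) * (t : ℂ)) = 0 := by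
      rw [integral_Icc_eq_integral_Ioc, ← intervalIntegral.integral_of_le (by linarith)]
      have hc : (Complex.I * (m : ℂ)) ≠ 0 := by
        apply mul_ne_zero Complex.I_ne_zero
        exact_mod_cast hm
      have key := integral_exp_mul_complex (a := -Real.pi) (b := Real.pi) (c := Complex.I * (m : ℂ)) hc
      rw [key]
      have he : Complex.exp ((Complex.I * (m : ℂ)) * ((Real.pi : ℝ) : ℂ))
          = Complex.exp ((Complex.I * (m : ℂ)) * ((-Real.pi : ℝ) : ℂ)) := by
        have hexp : (Complex.I * (m : ℂ)) * ((Real.pi : ℝ) : ℂ)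
            = (Complex.I * (m : ℂ)) * ((-Real.pi : ℝ) : ℂ) + (m : ℂ) * (2 * (Real.pi : ℂ) * Complex.I) := by
          push_cast
          ring
        rw [hexp, Complex.exp_add, Complex.exp_int_mul_two_pi_mul_I, mul_one]
      rw [he, sub_self, zero_div]
    rw [h0, smul_zero]


lemma SigmaN_normLeb1 (N : ℕ) : SigmaN normLeb1 N = 1 := by
  ext j k
  rw [show SigmaN normLeb1 N j k = (muHat1 normLeb1 ((j.1 : ℤ) - (k.1 : ℤ))).re from rfl,
    muHat1_normLeb1, Matrix.one_apply]
  by_cases h : j = k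
  · subst h
    simp
  · have hne : ((j.1 : ℤ) - (k.1 : ℤ)) ≠ 0 := by
      rw [sub_ne_zero]
      intro hjk
      exact h (Fin.ext (by exact_mod_cast hjk))
    rw [if_neg hne, if_neg h]
    simp

lemma parseval {N : ℕ} (u : Fin N → ℝ) :
    ∫ t, ‖P u t‖ ^ 2 ∂normLeb1 = ∑ j, u j ^ 2 := by
  rw [← quadform normLeb1 u, SigmaN_normLeb1, Matrix.one_mulVec]
  simp [dotProduct, sq]

lemma sup_bound {N : ℕ} (u : Fin N → ℝ) (t : ℝ) :
    ‖P u t‖ ^ 2 ≤ (N : ℝ) * ∑ j, u j ^ 2 := by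
  have h1 : ‖P u t‖ ≤ ∑ j, |u j| := by
    refine (norm_sum_le _ _).trans ?_
    refine Finset.sum_le_sum fun j _ => ?_
    rw [norm_mul, norm_exp_aux _ (by simp [Complex.mul_re, Complex.mul_im]), mul_one,
      Complex.norm_real, Real.norm_eq_abs]
  calc ‖P u t‖ ^ 2 ≤ (∑ j, |u j|) ^ 2 := pow_le_pow_left₀ (norm_nonneg _) h1 2
    _ ≤ (N : ℝ) * ∑ j : Fin N, |u j| ^ 2 := by
        have h2 := sq_sum_le_card_mul_sum_sq (s := (Finset.univ : Finset (Fin N)))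
          (f := fun j => |u j|)
        simpa using h2
    _ = (N : ℝ) * ∑ j, u j ^ 2 := by simp [sq_abs]

end SmallEig

open SmallEig

/-- If `λ{t : b(t) ≤ δ} ≤ C δ^p` for all `δ ∈ [0,π]`, then there
is a constant `c > 0` depending only on `C` and `p` such that for all `N ≥ 1` the
smallest eigenvalue of `Σ_N` is at least `c N^{-1/p}`. -/
theorem smallest_eigenvalue_polynomial_lower_bound
    (p C : ℝ) (hp : 0 < p) :
    ∃ c : ℝ, 0 < c ∧
      ∀ (μ μs : Measure ℝ) (b : ℝ → ℝ),
        IsFiniteMeasure μ →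
        μ {t : ℝ | ¬ |t| ≤ Real.pi} = 0 →
        μ.map (fun t => -t) = μ →
        Integrable b normLeb1 →
        (∀ᵐ t ∂normLeb1, 0 ≤ b t) →
        μs.MutuallySingular normLeb1 →
        μ = normLeb1.withDensity (fun t => ENNReal.ofReal (b t)) + μs →
        (∀ δ : ℝ, 0 ≤ δ → δ ≤ Real.pi →
          normLeb1 {t : ℝ | b t ≤ δ} ≤ ENNReal.ofReal (C * δ ^ p)) →
        ∀ N : ℕ, 1 ≤ N →
          ∀ x : ℝ, Module.End.HasEigenvalue (Matrix.mulVecLin (SigmaN μ N)) x →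
            c * (N : ℝ) ^ (-1 / p) ≤ x := by
  classical
  set C₀ : ℝ := max C 1 with hC₀def
  have hC₀1 : (1 : ℝ) ≤ C₀ := le_max_right _ _
  have hC₀0 : (0 : ℝ) < C₀ := lt_of_lt_of_le one_pos hC₀1
  have hπ : (0 : ℝ) < Real.pi := Real.pi_pos
  set c' : ℝ := min Real.pi ((2 * C₀) ^ (-1 / p)) with hc'def
  have hc'pos : 0 < c' := lt_min hπ (Real.rpow_pos_of_pos (by positivity) _)
  refine ⟨c' / 2, by positivity, ?_⟩
  intro μ μs b hfin hsupp hsym hbint hbnn hsing hdec hquant N hN x hx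
  haveI := hfin
  set δ : ℝ := min Real.pi ((2 * C₀ * (N : ℝ)) ^ (-1 / p)) with hδdef
  have hNpos : (0 : ℝ) < (N : ℝ) := by exact_mod_cast Nat.lt_of_lt_of_le Nat.zero_lt_one hN
  have hδpos : 0 < δ := lt_min hπ (Real.rpow_pos_of_pos (by positivity) _)
  have hδπ : δ ≤ Real.pi := min_le_left _ _
  -- eigenvector
  obtain ⟨v, hv⟩ := hx.exists_hasEigenvector
  have hvec : (SigmaN μ N).mulVec v = x • v := hv.apply_eq_smul
  set s : ℝ := ∑ j, v j ^ 2 with hsdef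
  have hs : 0 < s := by
    obtain ⟨j, hj⟩ := Function.ne_iff.mp hv.2
    exact Finset.sum_pos' (fun i _ => sq_nonneg _) ⟨j, Finset.mem_univ j, pow_two_pos_of_ne_zero hj⟩
  have hxs : x * s = ∫ t, ‖P v t‖ ^ 2 ∂μ := by
    rw [← quadform μ v, hvec]
    simp only [dotProduct, Pi.smul_apply, smul_eq_mul, hsdef, Finset.mul_sum]
    exact Finset.sum_congr rfl fun j _ => by ring
  -- bounded continuous f
  set f : ℝ → ℝ := fun t => ‖P v t‖ ^ 2 with hfdef
  have hPcont : Continuous (P v) := by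
    apply continuous_finset_sum
    intro j _
    exact continuous_const.mul (Complex.continuous_exp.comp (by continuity))
  have hf_cont : Continuous f := (hPcont.norm).pow 2
  have hf_nn : ∀ t, 0 ≤ f t := fun t => sq_nonneg _
  set M : ℝ := (N : ℝ) * s with hMdef
  have hf_le : ∀ t, f t ≤ M := fun t => sup_bound v t
  have hf_int : ∀ (ν : Measure ℝ), IsFiniteMeasure ν → Integrable f ν := by
    intro ν hν
    haveI := hν
    refine Integrable.mono' (integrable_const M) hf_cont.aestronglyMeasurable ?_
    filter_upwards with t
    rw [Real.norm_eq_abs, abs_of_nonneg (hf_nn t)]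
    exact hf_le t
  -- measurable representative of b
  have hb_aesm := hbint.1
  set b' : ℝ → ℝ := hb_aesm.mk b with hb'def
  have hb'meas : StronglyMeasurable b' := hb_aesm.stronglyMeasurable_mk
  have hbb' : b =ᵐ[normLeb1] b' := hb_aesm.ae_eq_mk
  have hb'nn : ∀ᵐ t ∂normLeb1, 0 ≤ b' t := by
    filter_upwards [hbnn, hbb'] with t h1 h2
    rw [← h2]
    exact h1
  set μ₁ : Measure ℝ := normLeb1.withDensity (fun t => ENNReal.ofReal (b' t)) with hμ₁def
  have hdec' : μ = μ₁ + μs := by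
    rw [hdec]
    congr 1
    exact withDensity_congr_ae (hbb'.mono fun t ht => by simp only [ht])
  have hfμ : Integrable f μ := hf_int μ hfin
  have hfsplit : Integrable f μ₁ ∧ Integrable f μs := by
    rw [hdec'] at hfμ
    exact integrable_add_measure.mp hfμ
  have hint1 : ∫ t, f t ∂μ₁ ≤ ∫ t, f t ∂μ := by
    rw [hdec', integral_add_measure hfsplit.1 hfsplit.2]
    have h0 : 0 ≤ ∫ t, f t ∂μs := integral_nonneg hf_nn
    linarith
  have hwd : ∫ t, f t ∂μ₁ = ∫ t, b' t * f t ∂normLeb1 := by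
    rw [hμ₁def]
    have hmeas : Measurable (fun t => (b' t).toNNReal) := hb'meas.measurable.real_toNNReal
    rw [show (fun t => ENNReal.ofReal (b' t)) = (fun t => ((b' t).toNNReal : ℝ≥0∞)) from rfl,
      integral_withDensity_eq_integral_smul hmeas f]
    refine integral_congr_ae ?_
    filter_upwards [hb'nn] with t ht
    rw [NNReal.smul_def, Real.coe_toNNReal _ ht, smul_eq_mul]
  have hb'int : Integrable b' normLeb1 := hbint.congr hbb'
  have hbf_int : Integrable (fun t => b' t * f t) normLeb1 := by
    have h := hb'int.bdd_mul hf_cont.aestronglyMeasurable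
      (c := M) (Filter.Eventually.of_forall fun t => by rw [Real.norm_eq_abs, abs_of_nonneg (hf_nn t)]; exact hf_le t)
    simpa [mul_comm] using h
  set S : Set ℝ := {t | b' t ≤ δ} with hSdef
  have hS : MeasurableSet S := measurableSet_le hb'meas.measurable measurable_const
  have h3 : δ * ∫ t in Sᶜ, f t ∂normLeb1 ≤ ∫ t, b' t * f t ∂normLeb1 := by
    have e1 : ∫ t in Sᶜ, b' t * f t ∂normLeb1 ≤ ∫ t, b' t * f t ∂normLeb1 := by
      apply setIntegral_le_integral hbf_int
      filter_upwards [hb'nn] with t ht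
      exact mul_nonneg ht (hf_nn t)
    have e2 : ∫ t in Sᶜ, δ * f t ∂normLeb1 ≤ ∫ t in Sᶜ, b' t * f t ∂normLeb1 := by
      refine setIntegral_mono_on ((hf_int normLeb1 inferInstance).const_mul δ).integrableOn
        hbf_int.integrableOn hS.compl ?_
      intro t ht
      have hδb : δ ≤ b' t := le_of_lt (lt_of_not_ge ht)
      exact mul_le_mul_of_nonneg_right hδb (hf_nn t)
    calc δ * ∫ t in Sᶜ, f t ∂normLeb1 = ∫ t in Sᶜ, δ * f t ∂normLeb1 := (integral_const_mul δ _).symm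
      _ ≤ ∫ t in Sᶜ, b' t * f t ∂normLeb1 := e2
      _ ≤ ∫ t, b' t * f t ∂normLeb1 := e1
  have hδp : δ ^ p ≤ (2 * C₀ * (N : ℝ))⁻¹ := by
    have h1 : δ ≤ (2 * C₀ * (N : ℝ)) ^ (-1 / p) := min_le_right _ _
    have h2 : δ ^ p ≤ ((2 * C₀ * (N : ℝ)) ^ (-1 / p)) ^ p :=
      Real.rpow_le_rpow hδpos.le h1 hp.le
    have h3' : ((2 * C₀ * (N : ℝ)) ^ (-1 / p)) ^ p = (2 * C₀ * (N : ℝ))⁻¹ := by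
      rw [← Real.rpow_mul (by positivity : (0:ℝ) ≤ 2 * C₀ * (N : ℝ)),
        show (-1 / p) * p = -1 by field_simp, Real.rpow_neg_one]
    rw [h3'] at h2
    exact h2
  have h4 : s / 2 ≤ ∫ t in Sᶜ, f t ∂normLeb1 := by
    have hcompl : (∫ t in S, f t ∂normLeb1) + ∫ t in Sᶜ, f t ∂normLeb1 = ∫ t, f t ∂normLeb1 :=
      integral_add_compl hS (hf_int normLeb1 inferInstance)
    have hparse : ∫ t, f t ∂normLeb1 = s := parseval v
    have i2 : (normLeb1 S).toReal ≤ C₀ * δ ^ p := by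
      have j1 : normLeb1 S ≤ normLeb1 {t : ℝ | b t ≤ δ} := by
        apply measure_mono_ae
        filter_upwards [hbb'] with t ht hmem
        show b t ≤ δ
        rw [ht]
        exact hmem
      have j2 := hquant δ hδpos.le hδπ
      have j3 : ENNReal.ofReal (C * δ ^ p) ≤ ENNReal.ofReal (C₀ * δ ^ p) :=
        ENNReal.ofReal_le_ofReal
          (mul_le_mul_of_nonneg_right (le_max_left _ _) (Real.rpow_nonneg hδpos.le p))
      exact ENNReal.toReal_le_of_le_ofReal
        (mul_nonneg hC₀0.le (Real.rpow_nonneg hδpos.le p)) ((j1.trans j2).trans j3)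
    have hSmall : ∫ t in S, f t ∂normLeb1 ≤ M * (C₀ * δ ^ p) := by
      have i1 : ∫ t in S, f t ∂normLeb1 ≤ ∫ t in S, M ∂normLeb1 :=
        setIntegral_mono_on (hf_int normLeb1 inferInstance).integrableOn
          (integrable_const M).integrableOn hS (fun t _ => hf_le t)
      rw [setIntegral_const, smul_eq_mul] at i1
      have hM0 : 0 ≤ M := le_trans (hf_nn 0) (hf_le 0)
      calc ∫ t in S, f t ∂normLeb1 ≤ (normLeb1 S).toReal * M := i1
        _ ≤ (C₀ * δ ^ p) * M := mul_le_mul_of_nonneg_right i2 hM0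
        _ = M * (C₀ * δ ^ p) := by ring
    have hMC : M * (C₀ * δ ^ p) ≤ s / 2 := by
      have k1 : (N : ℝ) * C₀ * δ ^ p ≤ (N : ℝ) * C₀ * (2 * C₀ * (N : ℝ))⁻¹ :=
        mul_le_mul_of_nonneg_left hδp (by positivity)
      have k2 : (N : ℝ) * C₀ * (2 * C₀ * (N : ℝ))⁻¹ = 1 / 2 := by
        field_simp
      calc M * (C₀ * δ ^ p) = s * ((N : ℝ) * C₀ * δ ^ p) := by rw [hMdef]; ring
        _ ≤ s * (1 / 2) := by
            rw [← k2] at *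
            exact mul_le_mul_of_nonneg_left k1 hs.le
        _ = s / 2 := by ring
    linarith
  have hxδ : δ / 2 ≤ x := by
    have hchain : δ * (s / 2) ≤ x * s := by
      calc δ * (s / 2) ≤ δ * ∫ t in Sᶜ, f t ∂normLeb1 := mul_le_mul_of_nonneg_left h4 hδpos.le
        _ ≤ ∫ t, b' t * f t ∂normLeb1 := h3
        _ = ∫ t, f t ∂μ₁ := hwd.symm
        _ ≤ ∫ t, f t ∂μ := hint1
        _ = x * s := hxs.symm
    nlinarith
  have hδc : c' * (N : ℝ) ^ (-1 / p) ≤ δ := by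
    apply le_min
    · have h1 : (N : ℝ) ^ (-1 / p) ≤ 1 :=
        Real.rpow_le_one_of_one_le_of_nonpos (by exact_mod_cast hN)
          (by rw [neg_div]; exact neg_nonpos.mpr (by positivity))
      calc c' * (N : ℝ) ^ (-1 / p) ≤ c' * 1 := mul_le_mul_of_nonneg_left h1 hc'pos.le
        _ = c' := mul_one _
        _ ≤ Real.pi := min_le_left _ _
    · have hsplit : (2 * C₀ * (N : ℝ)) ^ (-1 / p) = (2 * C₀) ^ (-1 / p) * (N : ℝ) ^ (-1 / p) :=
        Real.mul_rpow (by positivity) hNpos.le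
      rw [hsplit]
      exact mul_le_mul_of_nonneg_right (min_le_right _ _) (Real.rpow_nonneg hNpos.le _)
  calc c' / 2 * (N : ℝ) ^ (-1 / p) = (c' * (N : ℝ) ^ (-1 / p)) / 2 := by ring
    _ ≤ δ / 2 := by linarith
    _ ≤ x := hxδ
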